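/- Simple Moutard transform preserves the conjugate equation: under the same assumptions as for the direct equation, if ∂_z̄ ψ⁺ = -conj(u)·conj(ψ⁺), ω_{f₁,ψ⁺} is a purely imaginary potential for the pair (f₁, ψ⁺), and ψ̃⁺ = ψ⁺ - f₁⁺·ω_{f₁,ψ⁺}/ω_{f₁,f₁⁺}, then ∂_z̄ ψ̃⁺ = -conj(ũ)·conj(ψ̃⁺), where ũ = u + f₁·conj(f₁⁺)/ω_{f₁,f₁⁺}. -/

import Mathlib

open Complex ComplexConjugate

/-- Wirtinger derivative ∂_z = (∂_x - i ∂_y)/2. -/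
noncomputable def dz (f : ℂ → ℂ) (z : ℂ) : ℂ :=
  (fderiv ℝ f z 1 - Complex.I * fderiv ℝ f z Complex.I) / 2

/-- Wirtinger derivative ∂_z̄ = (∂_x + i ∂_y)/2. -/
noncomputable def dzbar (f : ℂ → ℂ) (z : ℂ) : ℂ :=
  (fderiv ℝ f z 1 + Complex.I * fderiv ℝ f z Complex.I) / 2


lemma dzbar_sub (f g : ℂ → ℂ) (z : ℂ) (hf : DifferentiableAt ℝ f z)
    (hg : DifferentiableAt ℝ g z) :
    dzbar (fun w => f w - g w) z = dzbar f z - dzbar g z := by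
  simp only [dzbar, fderiv_fun_sub hf hg, ContinuousLinearMap.sub_apply]
  ring

lemma dzbar_mul (f g : ℂ → ℂ) (z : ℂ) (hf : DifferentiableAt ℝ f z)
    (hg : DifferentiableAt ℝ g z) :
    dzbar (fun w => f w * g w) z = dzbar f z * g z + f z * dzbar g z := by
  simp only [dzbar, fderiv_fun_mul hf hg, ContinuousLinearMap.add_apply,
    ContinuousLinearMap.smul_apply, smul_eq_mul]
  ring

lemma dzbar_inv (g : ℂ → ℂ) (z : ℂ) (hg : DifferentiableAt ℝ g z) (h : g z ≠ 0) :
    dzbar (fun w => (g w)⁻¹) z = -((g z)^2)⁻¹ * dzbar g z := by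
  have h1 : HasFDerivAt (fun w : ℂ => w⁻¹)
      (((ContinuousLinearMap.smulRight (1 : ℂ →L[ℂ] ℂ) (-(g z ^ 2)⁻¹)).restrictScalars ℝ))
      (g z) := ((hasDerivAt_inv h).hasFDerivAt).restrictScalars ℝ
  have h2 : HasFDerivAt (fun w => (g w)⁻¹)
      ((((ContinuousLinearMap.smulRight (1 : ℂ →L[ℂ] ℂ) (-(g z ^ 2)⁻¹)).restrictScalars ℝ)).comp
        (fderiv ℝ g z)) z := h1.comp z hg.hasFDerivAt
  simp only [dzbar, h2.fderiv, ContinuousLinearMap.coe_comp', Function.comp_apply,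
    ContinuousLinearMap.coe_restrictScalars', ContinuousLinearMap.smulRight_apply,
    ContinuousLinearMap.one_apply, smul_eq_mul]
  ring

lemma conj_of_re_zero {w : ℂ} (h : w.re = 0) : conj w = -w := by
  apply Complex.ext <;> simp [h]

/-- the simple Moutard transform preserves the conjugate equation. -/
theorem simple_moutard_preserves_conjugate_equation
    (D : Set ℂ) (hD : IsOpen D) (u f₁ f₁p ψp ωff ωfψ : ℂ → ℂ)
    (hu : ContDiffOn ℝ 1 u D) (hf₁ : ContDiffOn ℝ 1 f₁ D)
    (hf₁p : ContDiffOn ℝ 1 f₁p D) (hψpC : ContDiffOn ℝ 1 ψp D)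
    (hωffC : ContDiffOn ℝ 1 ωff D) (hωfψC : ContDiffOn ℝ 1 ωfψ D)
    (hf : ∀ z ∈ D, dzbar f₁ z = u z * conj (f₁ z))
    (hfp : ∀ z ∈ D, dzbar f₁p z = -conj (u z) * conj (f₁p z))
    (hψp : ∀ z ∈ D, dzbar ψp z = -conj (u z) * conj (ψp z))
    (hωff1 : ∀ z ∈ D, dz ωff z = f₁ z * f₁p z)
    (hωff2 : ∀ z ∈ D, dzbar ωff z = -conj (f₁ z * f₁p z))
    (hωffim : ∀ z ∈ D, (ωff z).re = 0)
    (hωfψ1 : ∀ z ∈ D, dz ωfψ z = f₁ z * ψp z)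
    (hωfψ2 : ∀ z ∈ D, dzbar ωfψ z = -conj (f₁ z * ψp z))
    (hωfψim : ∀ z ∈ D, (ωfψ z).re = 0)
    (hne : ∀ z ∈ D, ωff z ≠ 0) :
    ∀ z ∈ D, dzbar (fun w => ψp w - f₁p w * ωfψ w / ωff w) z =
      -conj (u z + f₁ z * conj (f₁p z) / ωff z) *
        conj (ψp z - f₁p z * ωfψ z / ωff z) := by
  intro z hz
  have hmem := hD.mem_nhds hz
  have dfp := (hf₁p.contDiffAt hmem).differentiableAt one_ne_zero
  have dψ := (hψpC.contDiffAt hmem).differentiableAt one_ne_zero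
  have dωff := (hωffC.contDiffAt hmem).differentiableAt one_ne_zero
  have dωfψ := (hωfψC.contDiffAt hmem).differentiableAt one_ne_zero
  have hx := hne z hz
  have dinv : DifferentiableAt ℝ (fun w => (ωff w)⁻¹) z :=
    (((hasDerivAt_inv hx).hasFDerivAt.restrictScalars ℝ).comp z
      dωff.hasFDerivAt).differentiableAt
  have key : (fun w => ψp w - f₁p w * ωfψ w / ωff w)
      = fun w => ψp w - (f₁p w * ωfψ w) * (ωff w)⁻¹ := by
    funext w; rw [div_eq_mul_inv]
  rw [key, dzbar_sub _ _ _ dψ ((dfp.fun_mul dωfψ).fun_mul dinv),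
    dzbar_mul _ _ _ (dfp.fun_mul dωfψ) dinv, dzbar_mul _ _ _ dfp dωfψ,
    dzbar_inv _ _ dωff hx, hψp z hz, hfp z hz, hωfψ2 z hz, hωff2 z hz]
  simp only [map_mul, map_sub, map_add, map_div₀, map_neg, conj_conj,
    conj_of_re_zero (hωffim z hz), conj_of_re_zero (hωfψim z hz)]
  field_simp
  ring
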